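/- arXiv:1501.07108 — 2 statements merged into one kernel-verified Lean document; each statement's English description precedes it below -/
import Mathlib

section
/- If a graph G is word-representable, then G admits a semi-transitive orientation. Specifically, orienting each edge {x,y} from x to y when the first occurrence of x precedes the first occurrence of y in a representing word yields a semi-transitive orientation. -/
variable {V : Type*}

/-- Letters `x` and `y` alternate in the word `W`: the subword induced by the two
letters has no two equal consecutive letters. -/
def Alternate [DecidableEq V] (W : List V) (x y : V) : Prop :=
  (W.filter (fun z => z = x ∨ z = y)).Chain' (· ≠ ·)

/-- A word is `k`-uniform if every letter of the alphabet occurs exactly `k` times. -/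
def Uniform [DecidableEq V] (W : List V) (k : ℕ) : Prop :=
  ∀ x : V, W.count x = k

/-- A word `W` represents the graph `G`: every vertex occurs in `W` and two distinct
vertices are adjacent iff they alternate in `W`. -/
def Represents [DecidableEq V] (W : List V) (G : SimpleGraph V) : Prop :=
  (∀ x : V, x ∈ W) ∧ ∀ x y : V, x ≠ y → (G.Adj x y ↔ Alternate W x y)

def WordRepresentable [DecidableEq V] (G : SimpleGraph V) : Prop :=
  ∃ W : List V, Represents W G

def KWordRepresentable [DecidableEq V] (G : SimpleGraph V) (k : ℕ) : Prop :=
  ∃ W : List V, Uniform W k ∧ Represents W G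

/-- A digraph (relation) is acyclic if it has no directed cycle. -/
def Acyclic (E : V → V → Prop) : Prop :=
  ∀ x : V, ¬ Relation.TransGen E x x

/-- A digraph is semi-transitive if it is acyclic and for every directed path
`v 0 → v 1 → ⋯ → v k` such that the arc `v 0 → v k` is present, all arcs
`v i → v j` for `i < j` are present. -/
def SemiTransitive (E : V → V → Prop) : Prop :=
  Acyclic E ∧ ∀ (k : ℕ) (v : Fin (k + 1) → V),
    (∀ i : Fin k, E (v i.castSucc) (v i.succ)) →
    E (v 0) (v (Fin.last k)) →
    ∀ i j : Fin (k + 1), i < j → E (v i) (v j)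

/-- `E` is an orientation of the graph `G`. -/
def IsOrientation (G : SimpleGraph V) (E : V → V → Prop) : Prop :=
  ∀ x y : V, G.Adj x y ↔ (E x y ∨ E y x)

/-- The word `W` covers the set `A` of non-edges of the digraph `E` orienting `G`:
`W` is `k`-uniform for some `k`; its initial permutation is a topological sort of `E`
(first occurrences respect reachability); `G` is a subgraph of the graph represented
by `W`; and every pair in `A` is a non-edge of the graph represented by `W`. -/
def Covers [DecidableEq V] (W : List V) (G : SimpleGraph V) (E : V → V → Prop)
    (A : Set (V × V)) : Prop :=
  (∃ k : ℕ, Uniform W k) ∧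
  (∀ u v : V, Relation.TransGen E u v → W.idxOf u < W.idxOf v) ∧
  (∀ x y : V, G.Adj x y → Alternate W x y) ∧
  ∀ p ∈ A, ¬ Alternate W p.1 p.2

/-- `G` is representable by a concatenation of `k` permutations of its vertex set. -/
def PermutationallyRepresentable [DecidableEq V] (G : SimpleGraph V) (k : ℕ) : Prop :=
  ∃ Ps : List (List V), Ps.length = k ∧
    (∀ P ∈ Ps, P.Nodup ∧ ∀ x : V, x ∈ P) ∧
    Represents Ps.flatten G


section Aux
variable {V : Type*} [DecidableEq V]

/-- Balanced prefix counts: every prefix has `count y ≤ count x ≤ count y + 1`. -/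
def Bal (W : List V) (x y : V) : Prop :=
  ∀ n : ℕ, (W.take n).count y ≤ (W.take n).count x ∧
    (W.take n).count x ≤ (W.take n).count y + 1

lemma balF_of_chain : ∀ (L : List V) (x y : V), x ≠ y →
    (∀ z ∈ L, z = x ∨ z = y) → L.Chain' (· ≠ ·) → L.head? ≠ some y →
    ∀ m : ℕ, (L.take m).count y ≤ (L.take m).count x ∧
      (L.take m).count x ≤ (L.take m).count y + 1 := by
  intro L
  induction L with
  | nil => intro x y _ _ _ _ m; simp
  | cons a L ih =>
    intro x y hxy hmem hch hhd m
    have ha : a = x := by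
      rcases hmem a (by simp) with h | h
      · exact h
      · exact absurd (by simp [h]) hhd
    subst ha
    have hL : ∀ m : ℕ, (L.take m).count a ≤ (L.take m).count y ∧
        (L.take m).count y ≤ (L.take m).count a + 1 := by
      apply ih y a (Ne.symm hxy)
      · intro z hz; exact (hmem z (by simp [hz])).symm
      · exact hch.tail
      · intro hhd'
        cases L with
        | nil => simp at hhd'
        | cons b L' =>
          simp at hhd'
          exact (List.isChain_cons_cons.mp hch).1 hhd'.symm
    cases m with
    | zero => simp
    | succ m =>
      rw [List.take_succ_cons, List.count_cons, List.count_cons]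
      have := hL m
      simp only [beq_self_eq_true, if_true, beq_iff_eq]
      rw [if_neg hxy]
      omega

lemma chain_of_balF : ∀ (L : List V) (x y : V), x ≠ y →
    (∀ z ∈ L, z = x ∨ z = y) →
    (∀ m : ℕ, (L.take m).count y ≤ (L.take m).count x ∧
      (L.take m).count x ≤ (L.take m).count y + 1) →
    L.Chain' (· ≠ ·) := by
  intro L
  induction L with
  | nil => intro _ _ _ _ _; exact List.isChain_nil
  | cons a L ih =>
    intro x y hxy hmem hbal
    have ha : a = x := by
      rcases hmem a (by simp) with h | h
      · exact h
      · exfalso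
        have := hbal 1
        simp [h, List.count_cons, hxy.symm] at this
    subst ha
    have hbal' : ∀ m : ℕ, (L.take m).count a ≤ (L.take m).count y ∧
        (L.take m).count y ≤ (L.take m).count a + 1 := by
      intro m
      have := hbal (m + 1)
      rw [List.take_succ_cons, List.count_cons, List.count_cons] at this
      simp only [beq_self_eq_true, if_true, beq_iff_eq] at this
      rw [if_neg hxy] at this
      omega
    show List.IsChain _ (a :: L)
    rw [List.isChain_cons]
    constructor
    · intro b hb hab
      cases L with
      | nil => simp at hb
      | cons c L' =>
        simp at hb
        have hca : c = a := hb.trans hab.symm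
        have := (hbal' 1).1
        simp [List.count_cons, hca, hxy] at this
    · exact ih y a hxy.symm (fun z hz => (hmem z (by simp [hz])).symm) hbal'

lemma take_filter_eq (p : V → Bool) :
    ∀ (W : List V) (m : ℕ), ∃ n : ℕ, (W.filter p).take m = (W.take n).filter p := by
  intro W
  induction W with
  | nil => intro m; exact ⟨0, by simp⟩
  | cons a W ih =>
    intro m
    cases hpa : p a with
    | false =>
      obtain ⟨n, hn⟩ := ih m
      exact ⟨n + 1, by simp [List.filter_cons, hpa, hn]⟩
    | true =>
      cases m with
      | zero => exact ⟨0, by simp⟩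
      | succ m =>
        obtain ⟨n, hn⟩ := ih m
        exact ⟨n + 1, by simp [List.filter_cons, hpa, List.take_succ_cons, hn]⟩

lemma head_filter (x y : V) :
    ∀ (W : List V), x ∈ W → W.idxOf x < W.idxOf y →
    (W.filter (fun z => z = x ∨ z = y)).head? = some x := by
  intro W
  induction W with
  | nil => intro hx; simp at hx
  | cons a W ih =>
    intro hx hlt
    by_cases hax : a = x
    · subst hax
      simp [List.filter_cons]
    · by_cases hay : a = y
      · subst hay
        rw [List.idxOf_cons_self, List.idxOf_cons_ne _ hax] at hlt
        omega
      · have hpa : (fun z => decide (z = x ∨ z = y)) a = false := by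
          simp [hax, hay]
        rw [List.filter_cons_of_neg (by simp [hax, hay])]
        rw [List.idxOf_cons_ne _ hax, List.idxOf_cons_ne _ hay] at hlt
        exact ih (by rcases List.mem_cons.mp hx with h | h; exact absurd h.symm hax; exact h)
          (Nat.succ_lt_succ_iff.mp hlt)

lemma bal_of_alt {W : List V} {x y : V} (hx : x ∈ W) (hlt : W.idxOf x < W.idxOf y)
    (halt : (W.filter (fun z => z = x ∨ z = y)).Chain' (· ≠ ·)) : Bal W x y := by
  have hxy : x ≠ y := by rintro rfl; exact lt_irrefl _ hlt
  set p : V → Bool := fun z => decide (z = x ∨ z = y) with hp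
  have hmem : ∀ z ∈ W.filter p, z = x ∨ z = y := by
    intro z hz
    have := (List.mem_filter.mp hz).2
    simpa [hp] using this
  have hhd : (W.filter p).head? ≠ some y := by
    rw [head_filter x y W hx hlt]
    simp [hxy]
  have hF := balF_of_chain (W.filter p) x y hxy hmem halt hhd
  intro n
  have hpre : (W.take n).filter p <+: W.filter p :=
    List.IsPrefix.filter p (List.take_prefix n W)
  have heq : (W.take n).filter p =
      (W.filter p).take ((W.take n).filter p).length := List.prefix_iff_eq_take.mp hpre
  have hcx : (W.take n).count x = ((W.take n).filter p).count x :=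
    (List.count_filter (by simp [hp])).symm
  have hcy : (W.take n).count y = ((W.take n).filter p).count y :=
    (List.count_filter (by simp [hp])).symm
  rw [hcx, hcy, heq]
  exact hF _

lemma alt_of_bal {W : List V} {x y : V} (hxy : x ≠ y) (hbal : Bal W x y) :
    (W.filter (fun z => z = x ∨ z = y)).Chain' (· ≠ ·) := by
  set p : V → Bool := fun z => decide (z = x ∨ z = y) with hp
  apply chain_of_balF (W.filter p) x y hxy
  · intro z hz
    have := (List.mem_filter.mp hz).2
    simpa [hp] using this
  · intro m
    obtain ⟨n, hn⟩ := take_filter_eq p W m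
    rw [hn]
    have hcx : ((W.take n).filter p).count x = (W.take n).count x :=
      List.count_filter (by simp [hp])
    have hcy : ((W.take n).filter p).count y = (W.take n).count y :=
      List.count_filter (by simp [hp])
    rw [hcx, hcy]
    exact hbal n

lemma path_trans {k : ℕ} (v : Fin (k + 1) → V) {r : V → V → Prop} (ht : Transitive r)
    (harc : ∀ i : Fin k, r (v i.castSucc) (v i.succ)) :
    ∀ i j : Fin (k + 1), i < j → r (v i) (v j) := by
  intro i j
  induction j using Fin.induction generalizing i with
  | zero => intro hij; exact absurd hij (by simp [Fin.lt_def])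
  | succ j ih =>
    intro hij
    have hij' : i.val ≤ j.val := by
      have := hij
      simp [Fin.lt_def] at this
      omega
    rcases eq_or_lt_of_le hij' with heq | hlt
    · have : i = j.castSucc := Fin.ext (by simpa using heq)
      rw [this]
      exact harc j
    · exact ht (ih i (by simpa [Fin.lt_def] using hlt)) (harc j)

end Aux

/-- If `W` represents `G`, then orienting each edge from the letter with
earlier first occurrence yields a semi-transitive orientation of `G`. -/
theorem stmt_2 {V : Type*} [Fintype V] [DecidableEq V] (G : SimpleGraph V)
    (W : List V) (h : Represents W G) :
    IsOrientation G (fun x y => G.Adj x y ∧ W.idxOf x < W.idxOf y) ∧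
    SemiTransitive (fun x y => G.Adj x y ∧ W.idxOf x < W.idxOf y) := by
  set E : V → V → Prop := fun x y => G.Adj x y ∧ W.idxOf x < W.idxOf y with hE
  have hlt_trans : Transitive fun a b : V => W.idxOf a < W.idxOf b :=
    fun a b c hab hbc => lt_trans hab hbc
  refine ⟨?_, ?_, ?_⟩
  · -- orientation
    intro x y
    constructor
    · intro hadj
      have hne : x ≠ y := hadj.ne
      have hxy : W.idxOf x ≠ W.idxOf y := fun heq =>
        hne ((List.idxOf_inj (h.1 x)).mp heq)
      rcases lt_or_gt_of_ne hxy with hlt | hlt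
      · exact Or.inl ⟨hadj, hlt⟩
      · exact Or.inr ⟨hadj.symm, hlt⟩
    · rintro (⟨ha, _⟩ | ⟨ha, _⟩)
      · exact ha
      · exact ha.symm
  · -- acyclic
    intro x hx
    have h2 : Relation.TransGen (fun a b : V => W.idxOf a < W.idxOf b) x x :=
      Relation.TransGen.mono (r := E) (fun a b (hab : E a b) => hab.2) x x hx
    rw [@Relation.transGen_eq_self _ _ ⟨fun a b c => @hlt_trans a b c⟩] at h2
    exact lt_irrefl _ h2
  · -- semi-transitive closure condition
    intro k v harcs h0k i j hij
    have hidx : ∀ a b : Fin (k + 1), a < b → W.idxOf (v a) < W.idxOf (v b) :=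
      path_trans v hlt_trans (fun i => (harcs i).2)
    have hne : v i ≠ v j := fun he => lt_irrefl _ (he ▸ hidx i j hij)
    have hbal_step : ∀ i : Fin k, Bal W (v i.castSucc) (v i.succ) := by
      intro i
      have hne' : v i.castSucc ≠ v i.succ := fun he =>
        lt_irrefl _ (he ▸ (harcs i).2)
      exact bal_of_alt (h.1 _) (harcs i).2 ((h.2 _ _ hne').mp (harcs i).1)
    have hmono : ∀ a b : Fin (k + 1), a < b →
        ∀ n : ℕ, (W.take n).count (v b) ≤ (W.take n).count (v a) := by
      exact path_trans (r := fun x y => ∀ n : ℕ,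
          (W.take n).count y ≤ (W.take n).count x) v
        (fun a b c hab hbc n => le_trans (hbc n) (hab n))
        (fun i n => (hbal_step i n).1)
    have hne0 : v 0 ≠ v (Fin.last k) := fun he => lt_irrefl _ (he ▸ h0k.2)
    have hbal0k : Bal W (v 0) (v (Fin.last k)) :=
      bal_of_alt (h.1 _) h0k.2 ((h.2 _ _ hne0).mp h0k.1)
    have hbal : Bal W (v i) (v j) := by
      intro n
      have h1 : (W.take n).count (v j) ≤ (W.take n).count (v i) := hmono i j hij n
      have h2 : (W.take n).count (v i) ≤ (W.take n).count (v 0) := by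
        rcases eq_or_lt_of_le (Fin.zero_le i) with heq | hlt
        · rw [← heq]
        · exact hmono 0 i hlt n
      have h3 : (W.take n).count (v 0) ≤ (W.take n).count (v (Fin.last k)) + 1 :=
        (hbal0k n).2
      have h4 : (W.take n).count (v (Fin.last k)) ≤ (W.take n).count (v j) := by
        rcases eq_or_lt_of_le (Fin.le_last j) with heq | hlt
        · rw [heq]
        · exact hmono j (Fin.last k) hlt n
      exact ⟨h1, by omega⟩
    exact ⟨(h.2 _ _ hne).mpr (alt_of_bal hne hbal), hidx i j hij⟩
end

section
/- If a graph G admits a semi-transitive orientation, then G is word-representable. Moreover, if G is not complete, then G is 2(n−κ)-word-representable, where n is the number of vertices and κ is the size of a maximum clique of G. -/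
variable {V : Type*}

set_option linter.unusedSectionVars false

section PathLemmas
variable {V : Type*} {E : V → V → Prop} {a b c : V}

lemma transGen_path (h : Relation.TransGen E a b) :
    ∃ (k : ℕ) (f : Fin (k + 1 + 1) → V), f 0 = a ∧ f (Fin.last (k + 1)) = b ∧
      ∀ i : Fin (k + 1), E (f i.castSucc) (f i.succ) := by
  induction h with
  | single h =>
    refine ⟨0, ![a, _], rfl, rfl, fun i => ?_⟩
    fin_cases i
    simpa using h
  | @tail b' c' hab hE ih =>
    obtain ⟨k, f, h0, hl, hc⟩ := ih
    refine ⟨k + 1, Fin.snoc f c', ?_, ?_, fun i => ?_⟩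
    · rw [show (0 : Fin (k+1+1+1)) = Fin.castSucc 0 by rfl, Fin.snoc_castSucc, h0]
    · simp
    · induction i using Fin.lastCases with
      | last =>
        rw [Fin.snoc_castSucc, hl, Fin.succ_last, Fin.snoc_last]
        exact hE
      | cast j =>
        rw [Fin.snoc_castSucc, Fin.succ_castSucc, Fin.snoc_castSucc]
        exact hc j

lemma semiTransitive_key (hst : SemiTransitive E) (hE : E a b)
    (h1 : Relation.TransGen E a c) (h2 : Relation.TransGen E c b) :
    E a c ∧ E c b := by
  obtain ⟨k1, f, f0, fl, fc⟩ := transGen_path h1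
  obtain ⟨k2, g, g0, gl, gc⟩ := transGen_path h2
  set N := k1 + 1 + (k2 + 1) with hN
  have hle : ∀ i : Fin (N + 1), ¬ ((i : ℕ) < k1 + 1 + 1) → (i : ℕ) - (k1 + 1) < k2 + 1 + 1 := by
    intro i hi
    have := i.isLt
    omega
  let h : Fin (N + 1) → V := fun i =>
    if hi : (i : ℕ) < k1 + 1 + 1 then f ⟨i, hi⟩ else g ⟨(i : ℕ) - (k1 + 1), hle i hi⟩
  have hdef : ∀ i : Fin (N + 1),
      h i = if hi : (i : ℕ) < k1 + 1 + 1 then f ⟨i, hi⟩ else g ⟨(i : ℕ) - (k1 + 1), hle i hi⟩ :=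
    fun _ => rfl
  have hf : ∀ (i : Fin (N + 1)) (hi : (i : ℕ) < k1 + 1 + 1), h i = f ⟨i, hi⟩ := by
    intro i hi; rw [hdef i, dif_pos hi]
  have hg : ∀ (i : Fin (N + 1)) (hi : ¬ ((i : ℕ) < k1 + 1 + 1)),
      h i = g ⟨(i : ℕ) - (k1 + 1), hle i hi⟩ := by
    intro i hi; rw [hdef i, dif_neg hi]
  have hmid : h ⟨k1 + 1, by omega⟩ = c := by
    rw [hf ⟨k1 + 1, by omega⟩ (by simp)]
    exact fl
  have h0 : h 0 = a := by
    rw [hf 0 (by simp)]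
    exact f0
  have hlast : h (Fin.last N) = b := by
    rw [hg (Fin.last N) (by simp [Fin.val_last, hN])]
    have : (⟨((Fin.last N : Fin (N+1)) : ℕ) - (k1 + 1), hle _ (by simp [Fin.val_last, hN])⟩ :
        Fin (k2 + 1 + 1)) = Fin.last (k2 + 1) := by
      ext
      simp only [Fin.val_last, hN]
      omega
    rw [this]
    exact gl
  have hchain : ∀ i : Fin N, E (h i.castSucc) (h i.succ) := by
    intro i
    have hiN : (i : ℕ) < N := i.isLt
    by_cases h1' : (i : ℕ) + 1 < k1 + 1 + 1
    · rw [hf i.castSucc (by simpa using by omega), hf i.succ (by simpa [Fin.val_succ] using h1')]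
      have := fc ⟨i, by omega⟩
      convert this using 2 <;> ext <;> simp
    · by_cases h2' : (i : ℕ) = k1 + 1
      · have e1 : i.castSucc = (⟨k1 + 1, by omega⟩ : Fin (N + 1)) := by
          ext; simpa using h2'
        rw [e1, hmid, hg i.succ (by simp [Fin.val_succ]; omega)]
        have := gc ⟨0, by omega⟩
        rw [show ((⟨0, by omega⟩ : Fin (k2 + 1)).castSucc) = 0 by rfl, g0] at this
        convert this using 2
        ext
        simp [Fin.val_succ, h2']
      · have hge : k1 + 1 + 1 ≤ (i : ℕ) := by omega
        rw [hg i.castSucc (by simp [Fin.coe_castSucc]; omega),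
            hg i.succ (by simp [Fin.val_succ]; omega)]
        have hj : (i : ℕ) - (k1 + 1) < k2 + 1 := by omega
        have := gc ⟨(i : ℕ) - (k1 + 1), hj⟩
        convert this using 2 <;>
          (ext; simp only [Fin.coe_castSucc, Fin.val_succ] <;> omega)
  have main := hst.2 N h hchain (by rw [h0, hlast]; exact hE)
  constructor
  · have := main 0 ⟨k1 + 1, by omega⟩ (by simp [Fin.lt_def])
    rwa [h0, hmid] at this
  · have := main ⟨k1 + 1, by omega⟩ (Fin.last N) (by simp only [Fin.lt_def, Fin.val_last]; omega)
    rwa [hmid, hlast] at this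

end PathLemmas


section WordConstruction
variable {V : Type*} [Fintype V] [DecidableEq V]

open Classical in
noncomputable def rho (E : V → V → Prop) (u : V) : ℕ :=
  (Finset.univ.filter fun z => Relation.TransGen E z u).card

omit [DecidableEq V] in
lemma rho_lt {E : V → V → Prop} (hac : ∀ x : V, ¬ Relation.TransGen E x x)
    {x y : V} (h : Relation.TransGen E x y) : rho E x < rho E y := by
  classical
  apply Finset.card_lt_card
  constructor
  · intro z hz
    simp only [Finset.mem_filter, Finset.mem_univ, true_and] at hz ⊢
    exact hz.trans h
  · intro hsub
    have hx : x ∈ Finset.univ.filter fun z => Relation.TransGen E z y := by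
      simp only [Finset.mem_filter, Finset.mem_univ, true_and]
      convert h
    have := hsub hx
    simp only [Finset.mem_filter, Finset.mem_univ, true_and] at this
    exact hac x (by convert this)

noncomputable def lam (E : V → V → Prop) : List V :=
  (Finset.univ.toList (α := V)).mergeSort (fun a b => decide (rho E a ≤ rho E b))

lemma lam_perm (E : V → V → Prop) : List.Perm (lam E) Finset.univ.toList :=
  List.mergeSort_perm _ _

lemma mem_lam (E : V → V → Prop) (x : V) : x ∈ lam E :=
  ((lam_perm E).mem_iff).2 (by simp [Finset.mem_toList])

lemma nodup_lam (E : V → V → Prop) : (lam E).Nodup :=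
  ((lam_perm E).nodup_iff).2 (Finset.nodup_toList _)

lemma count_lam (E : V → V → Prop) (x : V) : (lam E).count x = 1 :=
  List.count_eq_one_of_mem (nodup_lam E) (mem_lam E x)

omit [DecidableEq V] in
lemma pairwise_lam (E : V → V → Prop) :
    (lam E).Pairwise (fun a b => rho E a ≤ rho E b) := by
  have := List.pairwise_mergeSort (le := fun a b => decide (rho E a ≤ rho E b))
    (fun a b c hab hbc => by simp_all; omega)
    (fun a b => by simp; omega)
    (Finset.univ.toList (α := V))
  exact this.imp (by simp)

lemma eq_pair_of_list {l : List V} {x y : V} {w : V → ℕ} (hxy : x ≠ y)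
    (hlt : w x < w y) (hnd : l.Nodup) (hx : x ∈ l) (hy : y ∈ l)
    (hall : ∀ z ∈ l, z = x ∨ z = y)
    (hpw : l.Pairwise (fun a b => w a ≤ w b)) : l = [x, y] := by
  have hlen : l.length = 2 := by
    have h1 : l.toFinset = {x, y} := by
      ext z
      simp only [List.mem_toFinset, Finset.mem_insert, Finset.mem_singleton]
      constructor
      · exact hall z
      · rintro (rfl | rfl) <;> assumption
    have h2 := List.toFinset_card_of_nodup hnd
    rw [h1] at h2
    rw [← h2, Finset.card_insert_of_notMem (by simpa using hxy), Finset.card_singleton]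
  obtain ⟨a, b, hab⟩ := List.length_eq_two.1 hlen
  rw [hab] at hall hnd hpw hx hy ⊢
  have ha := hall a (by simp)
  have hb := hall b (by simp)
  have hne : a ≠ b := by simpa using hnd
  rcases ha with h1 | h1
  · rcases hb with h2 | h2
    · exact absurd (h1.trans h2.symm) hne
    · rw [h1, h2]
  · rcases hb with h2 | h2
    · exfalso
      simp only [List.pairwise_cons, List.mem_singleton] at hpw
      have := hpw.1 b rfl
      rw [h1, h2] at this
      omega
    · exact absurd (h1.trans h2.symm) hne

lemma lam_filter_pair {E : V → V → Prop} {x y : V} (hxy : x ≠ y)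
    (hlt : rho E x < rho E y) :
    (lam E).filter (fun z => decide (z = x ∨ z = y)) = [x, y] := by
  refine eq_pair_of_list (w := rho E) hxy hlt
    ((List.filter_sublist).nodup (nodup_lam E))
    (List.mem_filter.2 ⟨mem_lam E x, by simp⟩)
    (List.mem_filter.2 ⟨mem_lam E y, by simp⟩)
    (fun z hz => by simpa using (List.mem_filter.1 hz).2)
    (List.Pairwise.sublist (List.filter_sublist) (pairwise_lam E))

lemma lam_filter_single {E : V → V → Prop} (x : V) :
    (lam E).filter (fun z => decide (z = x)) = [x] := by
  rw [List.filter_eq, count_lam]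
  rfl



open Classical in
noncomputable def slotL (E : V → V → Prop) (q : V → Prop) : List V :=
  (lam E).filter (fun z => decide (q z))

lemma slot_both {E : V → V → Prop} {q : V → Prop} {x y : V} (hxy : x ≠ y)
    (hlt : rho E x < rho E y) (hqx : q x) (hqy : q y) :
    (slotL E q).filter (fun z => decide (z = x ∨ z = y)) = [x, y] := by
  rw [slotL, List.filter_filter]
  refine (List.filter_congr fun z _ => ?_).trans (lam_filter_pair hxy hlt)
  by_cases h1 : z = x
  · subst h1; simp [hqx]
  · by_cases h2 : z = y
    · subst h2; simp [hqy]
    · simp [h1, h2]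

lemma slot_left {E : V → V → Prop} {q : V → Prop} {x y : V} (hxy : x ≠ y)
    (hqx : q x) (hqy : ¬ q y) :
    (slotL E q).filter (fun z => decide (z = x ∨ z = y)) = [x] := by
  rw [slotL, List.filter_filter]
  refine (List.filter_congr fun z _ => ?_).trans (lam_filter_single x)
  by_cases h1 : z = x
  · subst h1; simp [hqx]
  · by_cases h2 : z = y
    · subst h2; simp [hqy, hxy.symm]
    · simp [h1, h2]

lemma slot_right {E : V → V → Prop} {q : V → Prop} {x y : V} (hxy : x ≠ y)
    (hqx : ¬ q x) (hqy : q y) :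
    (slotL E q).filter (fun z => decide (z = x ∨ z = y)) = [y] := by
  rw [slotL, List.filter_filter]
  refine (List.filter_congr fun z _ => ?_).trans (lam_filter_single y)
  by_cases h1 : z = x
  · subst h1; simp [hqx, hxy]
  · by_cases h2 : z = y
    · subst h2; simp [hqy]
    · simp [h1, h2]

lemma slot_none {E : V → V → Prop} {q : V → Prop} {x y : V}
    (hqx : ¬ q x) (hqy : ¬ q y) :
    (slotL E q).filter (fun z => decide (z = x ∨ z = y)) = [] := by
  rw [slotL, List.filter_filter]
  rw [List.filter_eq_nil_iff]
  intro z _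
  by_cases h1 : z = x
  · subst h1; simp [hqx]
  · by_cases h2 : z = y
    · subst h2; simp [hqy]
    · simp [h1, h2]

lemma slot_count_pos {E : V → V → Prop} {q : V → Prop} {u : V} (h : q u) :
    (slotL E q).count u = 1 := by
  rw [slotL, List.count_filter (by simpa using h), count_lam]

lemma slot_count_neg {E : V → V → Prop} {q : V → Prop} {u : V} (h : ¬ q u) :
    (slotL E q).count u = 0 := by
  rw [List.count_eq_zero]
  intro hmem
  rw [slotL, List.mem_filter] at hmem
  exact h (by simpa using hmem.2)



variable {E : V → V → Prop}

def q1 (E : V → V → Prop) (v u : V) : Prop := u ≠ v ∧ ¬ Relation.TransGen E v u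
def q2 (E : V → V → Prop) (v u : V) : Prop := Relation.TransGen E u v ∧ ¬ E u v
def q3 (E : V → V → Prop) (v u : V) : Prop := E v u
def q4 (E : V → V → Prop) (v u : V) : Prop := E u v
def q5 (E : V → V → Prop) (v u : V) : Prop := Relation.TransGen E v u ∧ ¬ E v u
def q6 (E : V → V → Prop) (v u : V) : Prop :=
  u ≠ v ∧ ¬ Relation.TransGen E u v ∧ ¬ Relation.TransGen E v u
def q7 (E : V → V → Prop) (v u : V) : Prop := Relation.TransGen E v u

noncomputable def block (E : V → V → Prop) (v : V) : List V :=
  slotL E (q1 E v) ++ (slotL E (q2 E v) ++ ([v] ++ (slotL E (q3 E v) ++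
    (slotL E (q4 E v) ++ ([v] ++ (slotL E (q5 E v) ++ (slotL E (q6 E v) ++
      slotL E (q7 E v))))))))

section AcycHelpers
variable (hac : ∀ x : V, ¬ Relation.TransGen E x x)
include hac

omit [Fintype V] [DecidableEq V]

lemma nE_self {a : V} : ¬ E a a := fun h => hac a (.single h)
lemma nT_self {a : V} : ¬ Relation.TransGen E a a := hac a
lemma no2 {a b : V} (h : E a b) : ¬ E b a :=
  fun h' => hac a ((Relation.TransGen.single h).trans (.single h'))
lemma nET {a b : V} (h : E a b) : ¬ Relation.TransGen E b a :=
  fun h' => hac a ((Relation.TransGen.single h).trans h')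
lemma nTT {a b : V} (h : Relation.TransGen E a b) : ¬ Relation.TransGen E b a :=
  fun h' => hac a (h.trans h')
lemma nTE {a b : V} (h : Relation.TransGen E a b) : ¬ E b a :=
  fun h' => hac a (h.trans (.single h'))
lemma ne_of_E {a b : V} (h : E a b) : a ≠ b := fun he => nE_self hac (he ▸ h)
lemma ne_of_T {a b : V} (h : Relation.TransGen E a b) : a ≠ b :=
  fun he => hac a (he ▸ h)

lemma classify (u v : V) :
    u = v ∨ E u v ∨ (Relation.TransGen E u v ∧ ¬ E u v) ∨ E v u ∨
      (Relation.TransGen E v u ∧ ¬ E v u) ∨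
      (u ≠ v ∧ ¬ Relation.TransGen E u v ∧ ¬ Relation.TransGen E v u) := by
  by_cases h1 : u = v
  · exact Or.inl h1
  by_cases h2 : E u v
  · exact Or.inr (Or.inl h2)
  by_cases h3 : Relation.TransGen E u v
  · exact Or.inr (Or.inr (Or.inl ⟨h3, h2⟩))
  by_cases h4 : E v u
  · exact Or.inr (Or.inr (Or.inr (Or.inl h4)))
  by_cases h5 : Relation.TransGen E v u
  · exact Or.inr (Or.inr (Or.inr (Or.inr (Or.inl ⟨h5, h4⟩))))
  · exact Or.inr (Or.inr (Or.inr (Or.inr (Or.inr ⟨h1, h3, h5⟩))))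

-- membership bit tables
lemma bits_v (v : V) : ¬ q1 E v v ∧ ¬ q2 E v v ∧ ¬ q3 E v v ∧ ¬ q4 E v v ∧
    ¬ q5 E v v ∧ ¬ q6 E v v ∧ ¬ q7 E v v := by
  refine ⟨fun h => h.1 rfl, fun h => hac v h.1, nE_self hac, nE_self hac,
    fun h => hac v h.1, fun h => h.1 rfl, hac v⟩

lemma bits_Nm {u v : V} (h : E u v) : q1 E v u ∧ ¬ q2 E v u ∧ ¬ q3 E v u ∧ q4 E v u ∧
    ¬ q5 E v u ∧ ¬ q6 E v u ∧ ¬ q7 E v u := by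
  refine ⟨⟨ne_of_E hac h, nET hac h⟩, fun h' => h'.2 h, no2 hac h, h,
    fun h' => nET hac h h'.1, fun h' => h'.2.1 (.single h), nET hac h⟩

lemma bits_A {u v : V} (h1 : Relation.TransGen E u v) (h2 : ¬ E u v) :
    q1 E v u ∧ q2 E v u ∧ ¬ q3 E v u ∧ ¬ q4 E v u ∧
    ¬ q5 E v u ∧ ¬ q6 E v u ∧ ¬ q7 E v u := by
  refine ⟨⟨ne_of_T hac h1, nTT hac h1⟩, ⟨h1, h2⟩, nTE hac h1, h2,
    fun h' => nTT hac h1 h'.1, fun h' => h'.2.1 h1, nTT hac h1⟩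

lemma bits_Np {u v : V} (h : E v u) : ¬ q1 E v u ∧ ¬ q2 E v u ∧ q3 E v u ∧ ¬ q4 E v u ∧
    ¬ q5 E v u ∧ ¬ q6 E v u ∧ q7 E v u := by
  refine ⟨fun h' => h'.2 (.single h), fun h' => nET hac h h'.1, h, no2 hac h,
    fun h' => h'.2 h, fun h' => h'.2.2 (.single h), .single h⟩

lemma bits_B {u v : V} (h1 : Relation.TransGen E v u) (h2 : ¬ E v u) :
    ¬ q1 E v u ∧ ¬ q2 E v u ∧ ¬ q3 E v u ∧ ¬ q4 E v u ∧
    q5 E v u ∧ ¬ q6 E v u ∧ q7 E v u := by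
  refine ⟨fun h' => h'.2 h1, fun h' => nTT hac h1 h'.1, h2, nTE hac h1,
    ⟨h1, h2⟩, fun h' => h'.2.2 h1, h1⟩

lemma bits_C {u v : V} (h1 : u ≠ v) (h2 : ¬ Relation.TransGen E u v)
    (h3 : ¬ Relation.TransGen E v u) :
    q1 E v u ∧ ¬ q2 E v u ∧ ¬ q3 E v u ∧ ¬ q4 E v u ∧
    ¬ q5 E v u ∧ q6 E v u ∧ ¬ q7 E v u := by
  refine ⟨⟨h1, h3⟩, fun h' => h2 h'.1, fun h' => h3 (.single h'), fun h' => h2 (.single h'),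
    fun h' => h3 h'.1, ⟨h1, h2, h3⟩, h3⟩

end AcycHelpers

theorem block_filter_arc (hst : SemiTransitive E) (v : V) {x y : V} (hxy : E x y) :
    (block E v).filter (fun z => decide (z = x ∨ z = y)) = [x, y, x, y] := by
  have hac : ∀ x : V, ¬ Relation.TransGen E x x := hst.1
  have hne : x ≠ y := ne_of_E hac hxy
  have hlt : rho E x < rho E y := rho_lt hac (.single hxy)
  simp only [block, List.filter_append]
  rcases classify hac x v with rfl | hx | ⟨hx1, hx2⟩ | hx | ⟨hx1, hx2⟩ | ⟨hx1, hx2, hx3⟩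
  · -- x = v : y is an out-neighbor
    obtain ⟨a1, a2, a3, a4, a5, a6, a7⟩ := bits_v hac x
    obtain ⟨b1, b2, b3, b4, b5, b6, b7⟩ := bits_Np hac hxy
    rw [slot_none a1 b1, slot_none a2 b2, slot_right hne a3 b3, slot_none a4 b4,
        slot_none a5 b5, slot_none a6 b6, slot_right hne a7 b7]
    simp
  · -- x ∈ N⁻(v) : E x v
    rcases classify hac y v with rfl | hy | ⟨hy1, hy2⟩ | hy | ⟨hy1, hy2⟩ | ⟨hy1, hy2, hy3⟩
    · -- y = v
      obtain ⟨a1, a2, a3, a4, a5, a6, a7⟩ := bits_Nm hac hx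
      obtain ⟨b1, b2, b3, b4, b5, b6, b7⟩ := bits_v hac y
      rw [slot_left hne a1 b1, slot_none a2 b2, slot_none a3 b3, slot_left hne a4 b4,
          slot_none a5 b5, slot_none a6 b6, slot_none a7 b7]
      simp
    · -- (Nm, Nm)
      obtain ⟨a1, a2, a3, a4, a5, a6, a7⟩ := bits_Nm hac hx
      obtain ⟨b1, b2, b3, b4, b5, b6, b7⟩ := bits_Nm hac hy
      rw [slot_both hne hlt a1 b1, slot_none a2 b2, slot_none a3 b3, slot_both hne hlt a4 b4,
          slot_none a5 b5, slot_none a6 b6, slot_none a7 b7]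
      simp [(ne_of_E hac hx).symm, (ne_of_E hac hy).symm]
    · -- (Nm, A) : impossible by semi-transitivity
      exact absurd (semiTransitive_key hst hx (.single hxy) hy1).2 hy2
    · -- (Nm, Np)
      obtain ⟨a1, a2, a3, a4, a5, a6, a7⟩ := bits_Nm hac hx
      obtain ⟨b1, b2, b3, b4, b5, b6, b7⟩ := bits_Np hac hy
      rw [slot_left hne a1 b1, slot_none a2 b2, slot_right hne a3 b3, slot_left hne a4 b4,
          slot_none a5 b5, slot_none a6 b6, slot_right hne a7 b7]
      simp [(ne_of_E hac hx).symm, Ne.symm (ne_of_E hac hy) |>.symm, ne_of_E hac hy]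
    · -- (Nm, B) : impossible
      exact absurd (semiTransitive_key hst hxy (.single hx) hy1).2 hy2
    · -- (Nm, C)
      obtain ⟨a1, a2, a3, a4, a5, a6, a7⟩ := bits_Nm hac hx
      obtain ⟨b1, b2, b3, b4, b5, b6, b7⟩ := bits_C hac hy1 hy2 hy3
      rw [slot_both hne hlt a1 b1, slot_none a2 b2, slot_none a3 b3, slot_left hne a4 b4,
          slot_none a5 b5, slot_right hne a6 b6, slot_none a7 b7]
      simp [(ne_of_E hac hx).symm, Ne.symm hy1]
  · -- x ∈ A⁰
    rcases classify hac y v with rfl | hy | ⟨hy1, hy2⟩ | hy | ⟨hy1, hy2⟩ | ⟨hy1, hy2, hy3⟩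
    · exact absurd hxy hx2
    · -- (A, Nm)
      obtain ⟨a1, a2, a3, a4, a5, a6, a7⟩ := bits_A hac hx1 hx2
      obtain ⟨b1, b2, b3, b4, b5, b6, b7⟩ := bits_Nm hac hy
      rw [slot_both hne hlt a1 b1, slot_left hne a2 b2, slot_none a3 b3, slot_right hne a4 b4,
          slot_none a5 b5, slot_none a6 b6, slot_none a7 b7]
      simp [(ne_of_T hac hx1).symm, (ne_of_E hac hy).symm]
    · -- (A, A)
      obtain ⟨a1, a2, a3, a4, a5, a6, a7⟩ := bits_A hac hx1 hx2
      obtain ⟨b1, b2, b3, b4, b5, b6, b7⟩ := bits_A hac hy1 hy2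
      rw [slot_both hne hlt a1 b1, slot_both hne hlt a2 b2, slot_none a3 b3, slot_none a4 b4,
          slot_none a5 b5, slot_none a6 b6, slot_none a7 b7]
      simp [(ne_of_T hac hx1).symm, (ne_of_T hac hy1).symm]
    · -- (A, Np) : impossible
      exact absurd (semiTransitive_key hst hxy hx1 (.single hy)).1 hx2
    · -- (A, B) : impossible
      exact absurd (semiTransitive_key hst hxy hx1 hy1).1 hx2
    · -- (A, C)
      obtain ⟨a1, a2, a3, a4, a5, a6, a7⟩ := bits_A hac hx1 hx2
      obtain ⟨b1, b2, b3, b4, b5, b6, b7⟩ := bits_C hac hy1 hy2 hy3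
      rw [slot_both hne hlt a1 b1, slot_left hne a2 b2, slot_none a3 b3, slot_none a4 b4,
          slot_none a5 b5, slot_right hne a6 b6, slot_none a7 b7]
      simp [(ne_of_T hac hx1).symm, Ne.symm hy1]
  · -- x ∈ N⁺(v) : E v x
    rcases classify hac y v with rfl | hy | ⟨hy1, hy2⟩ | hy | ⟨hy1, hy2⟩ | ⟨hy1, hy2, hy3⟩
    · exact absurd ((Relation.TransGen.single hx).trans (.single hxy)) (hac _)
    · exact absurd (((Relation.TransGen.single hx).trans (.single hxy)).trans (.single hy)) (hac v)
    · exact absurd (((Relation.TransGen.single hx).trans (.single hxy)).trans hy1) (hac v)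
    · -- (Np, Np)
      obtain ⟨a1, a2, a3, a4, a5, a6, a7⟩ := bits_Np hac hx
      obtain ⟨b1, b2, b3, b4, b5, b6, b7⟩ := bits_Np hac hy
      rw [slot_none a1 b1, slot_none a2 b2, slot_both hne hlt a3 b3, slot_none a4 b4,
          slot_none a5 b5, slot_none a6 b6, slot_both hne hlt a7 b7]
      simp [ne_of_E hac hx, ne_of_E hac hy]
    · -- (Np, B)
      obtain ⟨a1, a2, a3, a4, a5, a6, a7⟩ := bits_Np hac hx
      obtain ⟨b1, b2, b3, b4, b5, b6, b7⟩ := bits_B hac hy1 hy2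
      rw [slot_none a1 b1, slot_none a2 b2, slot_left hne a3 b3, slot_none a4 b4,
          slot_right hne a5 b5, slot_none a6 b6, slot_both hne hlt a7 b7]
      simp [ne_of_E hac hx, ne_of_T hac hy1]
    · -- (Np, C) : impossible
      exact absurd ((Relation.TransGen.single hx).trans (.single hxy)) hy3
  · -- x ∈ B⁰
    rcases classify hac y v with rfl | hy | ⟨hy1, hy2⟩ | hy | ⟨hy1, hy2⟩ | ⟨hy1, hy2, hy3⟩
    · exact absurd (hx1.trans (.single hxy)) (hac _)
    · exact absurd ((hx1.trans (.single hxy)).trans (.single hy)) (hac v)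
    · exact absurd ((hx1.trans (.single hxy)).trans hy1) (hac v)
    · -- (B, Np) : impossible
      exact absurd (semiTransitive_key hst hy hx1 (.single hxy)).1 hx2
    · -- (B, B)
      obtain ⟨a1, a2, a3, a4, a5, a6, a7⟩ := bits_B hac hx1 hx2
      obtain ⟨b1, b2, b3, b4, b5, b6, b7⟩ := bits_B hac hy1 hy2
      rw [slot_none a1 b1, slot_none a2 b2, slot_none a3 b3, slot_none a4 b4,
          slot_both hne hlt a5 b5, slot_none a6 b6, slot_both hne hlt a7 b7]
      simp [ne_of_T hac hx1, ne_of_T hac hy1]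
    · -- (B, C) : impossible
      exact absurd (hx1.trans (.single hxy)) hy3
  · -- x ∈ C
    rcases classify hac y v with rfl | hy | ⟨hy1, hy2⟩ | hy | ⟨hy1, hy2⟩ | ⟨hy1', hy2', hy3'⟩
    · exact absurd (.single hxy) hx2
    · exact absurd ((Relation.TransGen.single hxy).trans (.single hy)) hx2
    · exact absurd ((Relation.TransGen.single hxy).trans hy1) hx2
    · -- (C, Np)
      obtain ⟨a1, a2, a3, a4, a5, a6, a7⟩ := bits_C hac hx1 hx2 hx3
      obtain ⟨b1, b2, b3, b4, b5, b6, b7⟩ := bits_Np hac hy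
      rw [slot_left hne a1 b1, slot_none a2 b2, slot_right hne a3 b3, slot_none a4 b4,
          slot_none a5 b5, slot_left hne a6 b6, slot_right hne a7 b7]
      simp [Ne.symm hx1, ne_of_E hac hy]
    · -- (C, B)
      obtain ⟨a1, a2, a3, a4, a5, a6, a7⟩ := bits_C hac hx1 hx2 hx3
      obtain ⟨b1, b2, b3, b4, b5, b6, b7⟩ := bits_B hac hy1 hy2
      rw [slot_left hne a1 b1, slot_none a2 b2, slot_none a3 b3, slot_none a4 b4,
          slot_right hne a5 b5, slot_left hne a6 b6, slot_right hne a7 b7]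
      simp [Ne.symm hx1, ne_of_T hac hy1]
    · -- (C, C)
      obtain ⟨a1, a2, a3, a4, a5, a6, a7⟩ := bits_C hac hx1 hx2 hx3
      obtain ⟨b1, b2, b3, b4, b5, b6, b7⟩ := bits_C hac hy1' hy2' hy3'
      rw [slot_both hne hlt a1 b1, slot_none a2 b2, slot_none a3 b3, slot_none a4 b4,
          slot_none a5 b5, slot_both hne hlt a6 b6, slot_none a7 b7]
      simp [Ne.symm hx1, Ne.symm hy1']

lemma block_count (hac : ∀ x : V, ¬ Relation.TransGen E x x) (v u : V) :
    (block E v).count u = 2 := by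
  simp only [block, List.count_append]
  rcases classify hac u v with rfl | hu | ⟨hu1, hu2⟩ | hu | ⟨hu1, hu2⟩ | ⟨hu1, hu2, hu3⟩
  · obtain ⟨a1, a2, a3, a4, a5, a6, a7⟩ := bits_v hac u
    rw [slot_count_neg a1, slot_count_neg a2, slot_count_neg a3, slot_count_neg a4,
        slot_count_neg a5, slot_count_neg a6, slot_count_neg a7]
    simp
  · obtain ⟨a1, a2, a3, a4, a5, a6, a7⟩ := bits_Nm hac hu
    rw [slot_count_pos a1, slot_count_neg a2, slot_count_neg a3, slot_count_pos a4,
        slot_count_neg a5, slot_count_neg a6, slot_count_neg a7]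
    simp [List.count_singleton, ne_of_E hac hu, (ne_of_E hac hu).symm]
  · obtain ⟨a1, a2, a3, a4, a5, a6, a7⟩ := bits_A hac hu1 hu2
    rw [slot_count_pos a1, slot_count_pos a2, slot_count_neg a3, slot_count_neg a4,
        slot_count_neg a5, slot_count_neg a6, slot_count_neg a7]
    simp [List.count_singleton, ne_of_T hac hu1, (ne_of_T hac hu1).symm]
  · obtain ⟨a1, a2, a3, a4, a5, a6, a7⟩ := bits_Np hac hu
    rw [slot_count_neg a1, slot_count_neg a2, slot_count_pos a3, slot_count_neg a4,
        slot_count_neg a5, slot_count_neg a6, slot_count_pos a7]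
    simp [List.count_singleton, ne_of_E hac hu, (ne_of_E hac hu).symm]
  · obtain ⟨a1, a2, a3, a4, a5, a6, a7⟩ := bits_B hac hu1 hu2
    rw [slot_count_neg a1, slot_count_neg a2, slot_count_neg a3, slot_count_neg a4,
        slot_count_pos a5, slot_count_neg a6, slot_count_pos a7]
    simp [List.count_singleton, ne_of_T hac hu1, (ne_of_T hac hu1).symm]
  · obtain ⟨a1, a2, a3, a4, a5, a6, a7⟩ := bits_C hac hu1 hu2 hu3
    rw [slot_count_pos a1, slot_count_neg a2, slot_count_neg a3, slot_count_neg a4,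
        slot_count_neg a5, slot_count_pos a6, slot_count_neg a7]
    simp [List.count_singleton, hu1, hu1.symm]

lemma block_filter_nonadj (hac : ∀ x : V, ¬ Relation.TransGen E x x)
    {u v : V} (h1 : ¬ E u v) (h2 : ¬ E v u) :
    ∃ l1 l2 : List V,
      (block E v).filter (fun z => decide (z = u ∨ z = v)) = l1 ++ v :: v :: l2 := by
  simp only [block, List.filter_append]
  rw [slot_none (q := q3 E v) (x := u) (y := v) h2 (nE_self hac),
      slot_none (q := q4 E v) (x := u) (y := v) h1 (nE_self hac)]
  refine ⟨(slotL E (q1 E v)).filter (fun z => decide (z = u ∨ z = v)) ++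
      (slotL E (q2 E v)).filter (fun z => decide (z = u ∨ z = v)),
    (slotL E (q5 E v)).filter (fun z => decide (z = u ∨ z = v)) ++
      ((slotL E (q6 E v)).filter (fun z => decide (z = u ∨ z = v)) ++
        (slotL E (q7 E v)).filter (fun z => decide (z = u ∨ z = v))), ?_⟩
  simp



noncomputable def gword (E : V → V → Prop) (l : List V) : List V :=
  (l.map (block E)).flatten

lemma gword_count (hac : ∀ x : V, ¬ Relation.TransGen E x x) (l : List V) (u : V) :
    (gword E l).count u = 2 * l.length := by
  induction l with
  | nil => simp [gword]
  | cons a t ih =>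
    simp only [gword, List.map_cons, List.flatten_cons, List.count_append] at ih ⊢
    rw [block_count hac, ih]
    simp [List.length_cons]
    ring

lemma gword_filter (l : List V) (p : V → Bool) :
    (gword E l).filter p = (l.map (fun v => (block E v).filter p)).flatten := by
  induction l with
  | nil => simp [gword]
  | cons a t ih =>
    simp only [gword, List.map_cons, List.flatten_cons, List.filter_append] at ih ⊢
    rw [ih]

lemma chain'_alt_rep {x y : V} (hne : x ≠ y) (m : ℕ) :
    List.Chain' (· ≠ ·) ((List.replicate m ([x, y, x, y])).flatten) ∧
      (∀ z ∈ ((List.replicate m ([x, y, x, y])).flatten).head?, z = x) := by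
  induction m with
  | zero => exact ⟨List.isChain_nil, by simp⟩
  | succ m ih =>
    obtain ⟨ih1, ih2⟩ := ih
    rw [List.replicate_succ, List.flatten_cons]
    constructor
    · show List.Chain' _ (x :: y :: x :: y :: _)
      refine List.isChain_cons.2 ⟨?_, List.isChain_cons.2 ⟨?_,
        List.isChain_cons.2 ⟨?_, List.isChain_cons.2 ⟨?_, ih1⟩⟩⟩⟩
      · intro z hz
        simp at hz
        rw [← hz]
        exact hne
      · intro z hz
        simp at hz
        rw [← hz]
        exact hne.symm
      · intro z hz
        simp at hz
        rw [← hz]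
        exact hne
      · intro z hz
        rw [ih2 z (by simpa using hz)]
        exact hne.symm
    · intro z hz
      simp at hz
      exact hz.symm

lemma gword_alternate (hst : SemiTransitive E)
    {x y : V} (hxy : E x y) (l : List V) : Alternate (gword E l) x y := by
  have hac : ∀ x : V, ¬ Relation.TransGen E x x := hst.1
  have hne : x ≠ y := fun h => hac x (by rw [h] at hxy ⊢; exact .single hxy)
  show List.Chain' _ _
  rw [gword_filter]
  have : l.map (fun v => (block E v).filter (fun z => decide (z = x ∨ z = y))) =
      List.replicate l.length ([x, y, x, y]) := by
    rw [← List.map_const']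
    exact List.map_congr_left fun v _ => block_filter_arc hst v hxy
  rw [this]
  exact (chain'_alt_rep hne l.length).1

lemma alternate_comm (W : List V) (x y : V) : Alternate W x y ↔ Alternate W y x := by
  unfold Alternate
  rw [List.filter_congr (fun z _ => decide_eq_decide.2 (or_comm))]

lemma gword_not_alternate (hac : ∀ x : V, ¬ Relation.TransGen E x x)
    {u v : V} (h1 : ¬ E u v) (h2 : ¬ E v u) {l : List V} (hv : v ∈ l) :
    ¬ Alternate (gword E l) u v := by
  intro hch
  have hch' : List.Chain' (· ≠ ·)
      ((gword E l).filter (fun z => decide (z = u ∨ z = v))) := hch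
  rw [gword_filter] at hch'
  obtain ⟨l1, l2, heq⟩ := block_filter_nonadj hac h1 h2
  have hmem : (block E v).filter (fun z => decide (z = u ∨ z = v)) ∈
      l.map (fun w => (block E w).filter (fun z => decide (z = u ∨ z = v))) :=
    List.mem_map_of_mem hv
  rw [heq] at hmem
  have hinf : [v, v] <:+: l1 ++ v :: v :: l2 := ⟨l1, l2, by simp⟩
  have hinf2 := hinf.trans (List.infix_of_mem_flatten hmem)
  have := hch'.infix hinf2
  simp at this


end WordConstruction

/-- A semi-transitively orientable graph is word-representable; moreover,
if `G` is not complete then `G` is `2(n - κ)`-word-representable, where `n` is the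
number of vertices and `κ` the size of a maximum clique of `G`. -/
theorem stmt_3 {V : Type*} [Fintype V] [DecidableEq V] (G : SimpleGraph V)
    (E : V → V → Prop) (hor : IsOrientation G E) (hst : SemiTransitive E) :
    WordRepresentable G ∧
    (G ≠ ⊤ → ∀ κ : ℕ, IsGreatest {m : ℕ | ∃ s : Finset V, G.IsNClique m s} κ →
      KWordRepresentable G (2 * (Fintype.card V - κ))) := by
  classical
  have hac : ∀ x : V, ¬ Relation.TransGen E x x := hst.1
  constructor
  · -- Part 1: word-representability, using blocks for every vertex
    refine ⟨gword E Finset.univ.toList, fun x => ?_, fun x y hxy => ?_⟩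
    · have h2 : (block E x).count x = 2 := block_count hac x x
      have hmem : x ∈ block E x := by
        rw [← List.count_pos_iff]
        omega
      exact List.mem_flatten.2 ⟨block E x,
        List.mem_map_of_mem (by simp [Finset.mem_toList]), hmem⟩
    · constructor
      · intro hadj
        rcases (hor x y).1 hadj with h | h
        · exact gword_alternate hst h _
        · exact (alternate_comm _ _ _).2 (gword_alternate hst h _)
      · intro halt
        by_contra hnadj
        have h1 : ¬ E x y := fun h => hnadj ((hor x y).2 (Or.inl h))
        have h2 : ¬ E y x := fun h => hnadj ((hor x y).2 (Or.inr h))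
        exact gword_not_alternate hac h1 h2 (by simp [Finset.mem_toList]) halt
  · -- Part 2: the uniform bound
    intro hne κ hκ
    obtain ⟨K, hK⟩ := hκ.1
    obtain ⟨x0, y0, hxy0, hnadj0⟩ : ∃ x y : V, x ≠ y ∧ ¬ G.Adj x y := by
      by_contra hcon
      push_neg at hcon
      apply hne
      ext x y
      simp only [SimpleGraph.top_adj]
      exact ⟨fun h => h.ne, fun h => hcon x y h⟩
    have hKne : K ≠ Finset.univ := by
      rintro rfl
      exact hnadj0 (hK.1 (by simp) (by simp) hxy0)
    have hKc : Kᶜ.Nonempty := by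
      rw [Finset.nonempty_iff_ne_empty]
      intro h
      exact hKne ((Finset.compl_eq_empty_iff K).1 h)
    refine ⟨gword E Kᶜ.toList, ?_, fun x => ?_, fun x y hxy => ?_⟩
    · intro x
      rw [gword_count hac, Finset.length_toList, Finset.card_compl, hK.2]
    · obtain ⟨a, ha⟩ := hKc
      have h2 : (block E a).count x = 2 := block_count hac a x
      have hmem : x ∈ block E a := by
        rw [← List.count_pos_iff]
        omega
      exact List.mem_flatten.2 ⟨block E a,
        List.mem_map_of_mem (by rwa [Finset.mem_toList]), hmem⟩
    · constructor
      · intro hadj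
        rcases (hor x y).1 hadj with h | h
        · exact gword_alternate hst h _
        · exact (alternate_comm _ _ _).2 (gword_alternate hst h _)
      · intro halt
        by_contra hnadj
        have h1 : ¬ E x y := fun h => hnadj ((hor x y).2 (Or.inl h))
        have h2 : ¬ E y x := fun h => hnadj ((hor x y).2 (Or.inr h))
        have hnotboth : x ∉ K ∨ y ∉ K := by
          by_contra hb
          push_neg at hb
          exact hnadj (hK.1 (Finset.mem_coe.2 hb.1) (Finset.mem_coe.2 hb.2) hxy)
        rcases hnotboth with hx | hy
        · exact gword_not_alternate hac h2 h1 (by simp [Finset.mem_toList, hx])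
            ((alternate_comm _ _ _).1 halt)
        · exact gword_not_alternate hac h1 h2 (by simp [Finset.mem_toList, hy]) halt
end
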